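/- For any two vertices u and v of a temporal graph, the number of pairwise inverse-distance-wise non-dominated (distance, start) pairs realized by temporal u-v paths is at most the out-degree d_out(u) of u (the number of temporal edges leaving u). -/

import Mathlib

open scoped Classical

structure TEdge (V : Type) where
  src : V
  dst : V
  t : ℝ
  len : ℝ

variable {V : Type}

/-- Consecutive compatibility of temporal edges. -/
def compat (e f : TEdge V) : Prop := e.dst = f.src ∧ e.t + e.len ≤ f.t

/-- A temporal path from `x` to `y`: a nonempty list of temporal edges of `E`,
starting at `x`, ending at `y`, consecutively compatible. -/
def IsPath (E : Set (TEdge V)) (x y : V) (p : List (TEdge V)) : Prop :=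
  p ≠ [] ∧ (∀ e ∈ p, e ∈ E) ∧ p.head?.map TEdge.src = some x ∧
    p.getLast?.map TEdge.dst = some y ∧ List.Chain' compat p

/-- Starting time of a temporal path. -/
def startT (p : List (TEdge V)) : ℝ := ((p.head?).map TEdge.t).getD 0

/-- Ending (arrival) time of a temporal path. -/
def endT (p : List (TEdge V)) : ℝ := ((p.getLast?).map (fun e => e.t + e.len)).getD 0

/-- Distance (sum of traversal times) of a temporal path. -/
def distT (p : List (TEdge V)) : ℝ := (p.map TEdge.len).sum

/-- Any family of pairwise inverse-distance-wise non-dominated (distance, start)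
pairs realized by temporal `u`-`v` paths has size at most the out-degree of `u`. -/
theorem stmt6 [DecidableEq V] (E : Finset (TEdge V)) (u v : V)
    (F : Finset (ℝ × ℝ))
    (hreal : ∀ ds ∈ F, ∃ p, IsPath (↑E : Set (TEdge V)) u v p ∧
      distT p = ds.1 ∧ startT p = ds.2)
    (hnd : ∀ ds ∈ F, ∀ ds' ∈ F, ds ≠ ds' →
      ¬ (ds'.1 ≤ ds.1 ∧ ds.2 ≤ ds'.2 ∧ (ds'.1 < ds.1 ∨ ds.2 < ds'.2))) :
    F.card ≤ (E.filter (fun e => e.src = u)).card := by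
  classical
  have h1 : ∀ ds ∈ F, ∃ e, e ∈ E.filter (fun e => e.src = u) ∧ e.t = ds.2 := by
    intro ds hds
    obtain ⟨p, hp, hd, hs⟩ := hreal ds hds
    obtain ⟨hne, hmem, hhead, _, _⟩ := hp
    cases p with
    | nil => exact absurd rfl hne
    | cons e rest =>
      refine ⟨e, ?_, ?_⟩
      · simp only [Finset.mem_filter]
        refine ⟨?_, ?_⟩
        · exact hmem e List.mem_cons_self
        · simpa using hhead
      · simpa [startT] using hs
  set f : ℝ × ℝ → TEdge V := fun ds =>
    if h : ds ∈ F then (h1 ds h).choose else ⟨u, u, 0, 0⟩ with hf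
  apply Finset.card_le_card_of_injOn f
  · intro ds hds
    simp only [hf]; rw [dif_pos (Finset.mem_coe.mp hds)]
    exact ((h1 ds hds).choose_spec).1
  · intro a ha b hb hab
    have hta : (f a).t = a.2 := by
      simp only [hf]; rw [dif_pos (Finset.mem_coe.mp ha)]; exact ((h1 a ha).choose_spec).2
    have htb : (f b).t = b.2 := by
      simp only [hf]; rw [dif_pos (Finset.mem_coe.mp hb)]; exact ((h1 b hb).choose_spec).2
    have hs : a.2 = b.2 := by rw [← hta, ← htb, hab]
    by_contra hne
    rcases lt_trichotomy a.1 b.1 with h | h | h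
    · exact hnd b hb a ha (Ne.symm hne) ⟨le_of_lt h, le_of_eq hs.symm, Or.inl h⟩
    · exact hne (Prod.ext h hs)
    · exact hnd a ha b hb hne ⟨le_of_lt h, le_of_eq hs, Or.inl h⟩
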